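/- Let M = (A,B,C,D) be a discrete-time system, T ∈ ℂ^{n×n} invertible, X := TᴴT, and ξ ∈ [0,1). Suppose W̃(X,M) − ξ·diag(X, X, 2I_m) ≥ 0. Then the I-passivity radius of the normalized realization M_T := (TAT⁻¹, TB, CT⁻¹, D) is at least ξ: every Δ ∈ ℂ^{(n+m)×(n+m)} for which Ŵ(Iₙ, M_T) + E₁ΔE₂ᴴ + E₂ΔᴴE₁ᴴ is singular satisfies ‖Δ‖₂ ≥ ξ. -/

import Mathlib

open Matrix
open scoped ComplexOrder

/-- The spectral norm (largest singular value) of a complex matrix. -/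
noncomputable def spNorm {k l : Type*} [Fintype k] [Fintype l] [DecidableEq k] [DecidableEq l]
    (A : Matrix k l ℂ) : ℝ :=
  ‖(Matrix.toEuclideanLin A).toContinuousLinearMap‖

/-- The matrix `W̃(X,M) = [[X, XA, XB],[AᴴX, X, Cᴴ],[BᴴX, C, Dᴴ + D]]`. -/
noncomputable def Wtil {n m : ℕ} (X A : Matrix (Fin n) (Fin n) ℂ)
    (B : Matrix (Fin n) (Fin m) ℂ) (C : Matrix (Fin m) (Fin n) ℂ)
    (D : Matrix (Fin m) (Fin m) ℂ) :
    Matrix (Fin n ⊕ (Fin n ⊕ Fin m)) (Fin n ⊕ (Fin n ⊕ Fin m)) ℂ :=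
  fromBlocks X (fromCols (X * A) (X * B)) (fromRows (Aᴴ * X) (Bᴴ * X))
    (fromBlocks X Cᴴ C (Dᴴ + D))

/-- `diag(X, X, 2·I_m)`. -/
noncomputable def diagXX2 {n : ℕ} (m : ℕ) (X : Matrix (Fin n) (Fin n) ℂ) :
    Matrix (Fin n ⊕ (Fin n ⊕ Fin m)) (Fin n ⊕ (Fin n ⊕ Fin m)) ℂ :=
  fromBlocks X 0 0 (fromBlocks X 0 0 ((2 : ℂ) • 1))

/-- `E₁ = [[I,0],[0,0],[0,I]]`. -/
noncomputable def Emat1 (n m : ℕ) : Matrix (Fin n ⊕ (Fin n ⊕ Fin m)) (Fin n ⊕ Fin m) ℂ :=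
  fromBlocks 1 0 (fromRows 0 0) (fromRows 0 1)

/-- `E₂ = [[0,0],[I,0],[0,I]]`. -/
noncomputable def Emat2 (n m : ℕ) : Matrix (Fin n ⊕ (Fin n ⊕ Fin m)) (Fin n ⊕ Fin m) ℂ :=
  fromBlocks 0 0 (fromRows 1 0) (fromRows 0 1)

section Aux

variable {n m : ℕ}

/-- The congruence transformation `S = diag(T⁻¹, T⁻¹, I)`. -/
noncomputable def Smat (m : ℕ) (T : Matrix (Fin n) (Fin n) ℂ) :
    Matrix (Fin n ⊕ (Fin n ⊕ Fin m)) (Fin n ⊕ (Fin n ⊕ Fin m)) ℂ :=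
  fromBlocks T⁻¹ 0 0 (fromBlocks T⁻¹ 0 0 1)

lemma conj_Wtil (T A : Matrix (Fin n) (Fin n) ℂ) (B : Matrix (Fin n) (Fin m) ℂ)
    (C : Matrix (Fin m) (Fin n) ℂ) (D : Matrix (Fin m) (Fin m) ℂ) (hT : IsUnit T) :
    (Smat m T)ᴴ * Wtil (Tᴴ * T) A B C D * Smat m T
      = Wtil 1 (T * A * T⁻¹) (T * B) (C * T⁻¹) D := by
  have hd : IsUnit T.det := (isUnit_iff_isUnit_det T).mp hT
  have h1 : T * T⁻¹ = 1 := mul_nonsing_inv T hd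
  have h2 : T⁻¹ * T = 1 := nonsing_inv_mul T hd
  have h3 : Tᴴ * (T⁻¹)ᴴ = 1 := by rw [← conjTranspose_mul, h2, conjTranspose_one]
  have h4 : (T⁻¹)ᴴ * Tᴴ = 1 := by rw [← conjTranspose_mul, h1, conjTranspose_one]
  have h1' : ∀ {p : Type} (M : Matrix (Fin n) p ℂ), T * (T⁻¹ * M) = M := fun M => by
    rw [← Matrix.mul_assoc, h1, Matrix.one_mul]
  have h2' : ∀ {p : Type} (M : Matrix (Fin n) p ℂ), T⁻¹ * (T * M) = M := fun M => by
    rw [← Matrix.mul_assoc, h2, Matrix.one_mul]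
  have h3' : ∀ {p : Type} (M : Matrix (Fin n) p ℂ), Tᴴ * ((T⁻¹)ᴴ * M) = M := fun M => by
    rw [← Matrix.mul_assoc, h3, Matrix.one_mul]
  have h4' : ∀ {p : Type} (M : Matrix (Fin n) p ℂ), (T⁻¹)ᴴ * (Tᴴ * M) = M := fun M => by
    rw [← Matrix.mul_assoc, h4, Matrix.one_mul]
  simp [Smat, Wtil, fromBlocks_conjTranspose, fromBlocks_multiply, fromBlocks_mul_fromRows,
    fromCols_mul_fromBlocks, mul_fromCols, fromRows_mul, conjTranspose_mul,
    Matrix.mul_assoc, h1, h2, h3, h4, h1', h2', h3', h4']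

lemma conj_diag (T : Matrix (Fin n) (Fin n) ℂ) (hT : IsUnit T) :
    (Smat m T)ᴴ * diagXX2 m (Tᴴ * T) * Smat m T = diagXX2 m 1 := by
  have hd : IsUnit T.det := (isUnit_iff_isUnit_det T).mp hT
  have h1 : T * T⁻¹ = 1 := mul_nonsing_inv T hd
  have h4 : (T⁻¹)ᴴ * Tᴴ = 1 := by rw [← conjTranspose_mul, h1, conjTranspose_one]
  have h4' : ∀ {p : Type} (M : Matrix (Fin n) p ℂ), (T⁻¹)ᴴ * (Tᴴ * M) = M := fun M => by
    rw [← Matrix.mul_assoc, h4, Matrix.one_mul]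
  simp [Smat, diagXX2, fromBlocks_conjTranspose, fromBlocks_multiply,
    Matrix.mul_assoc, h1, h4, h4']

lemma D0_eq : diagXX2 m (1 : Matrix (Fin n) (Fin n) ℂ)
    = Emat1 n m * (Emat1 n m)ᴴ + Emat2 n m * (Emat2 n m)ᴴ := by
  ext (i | i | i) (j | j | j) <;>
  simp [diagXX2, Emat1, Emat2, mul_apply, fromBlocks, fromRows_apply_inl, fromRows_apply_inr, conjTranspose_apply,
    one_apply, Fintype.sum_sum_type, Finset.sum_ite_eq, Finset.sum_ite_eq', smul_eq_mul,
    eq_comm, two_mul]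
  split <;> norm_num

lemma E1_mulVec (x : Fin n ⊕ (Fin n ⊕ Fin m) → ℂ) :
    (Emat1 n m)ᴴ *ᵥ x
      = Sum.elim (fun i => x (Sum.inl i)) (fun k => x (Sum.inr (Sum.inr k))) := by
  funext j
  cases j <;>
  simp [Emat1, mulVec, dotProduct, Fintype.sum_sum_type, conjTranspose_apply,
    fromBlocks, fromRows_apply_inl, fromRows_apply_inr, one_apply, Finset.sum_ite_eq, Finset.sum_ite_eq']

lemma E2_mulVec (x : Fin n ⊕ (Fin n ⊕ Fin m) → ℂ) :
    (Emat2 n m)ᴴ *ᵥ x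
      = Sum.elim (fun i => x (Sum.inr (Sum.inl i))) (fun k => x (Sum.inr (Sum.inr k))) := by
  funext j
  cases j <;>
  simp [Emat2, mulVec, dotProduct, Fintype.sum_sum_type, conjTranspose_apply,
    fromBlocks, fromRows_apply_inl, fromRows_apply_inr, one_apply, Finset.sum_ite_eq, Finset.sum_ite_eq']

lemma sandwich {a b : Type*} [Fintype a] [Fintype b]
    (E F : Matrix a b ℂ) (Δ : Matrix b b ℂ) (x : a → ℂ) :
    star x ⬝ᵥ ((E * Δ * Fᴴ) *ᵥ x) = star (Eᴴ *ᵥ x) ⬝ᵥ (Δ *ᵥ (Fᴴ *ᵥ x)) := by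
  rw [← mulVec_mulVec, ← mulVec_mulVec, dotProduct_mulVec, star_mulVec,
    conjTranspose_conjTranspose]

lemma sandwich' {a b : Type*} [Fintype a] [Fintype b]
    (E F : Matrix a b ℂ) (x : a → ℂ) :
    star x ⬝ᵥ ((E * Fᴴ) *ᵥ x) = star (Eᴴ *ᵥ x) ⬝ᵥ (Fᴴ *ᵥ x) := by
  rw [← mulVec_mulVec, dotProduct_mulVec, star_mulVec, conjTranspose_conjTranspose]

lemma conj_pair {b : Type*} [Fintype b] (Δ : Matrix b b ℂ) (u v : b → ℂ) :
    star v ⬝ᵥ (Δᴴ *ᵥ u) = star (star u ⬝ᵥ (Δ *ᵥ v)) := by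
  simp [dotProduct, mulVec, Finset.mul_sum, Finset.sum_mul, conjTranspose_apply]
  rw [Finset.sum_comm]
  ring_nf
  simp [mul_comm, mul_left_comm]

lemma dot_self_eq_norm_sq {b : Type*} [Fintype b] (u : b → ℂ) :
    star u ⬝ᵥ u = ((‖(WithLp.equiv 2 (b → ℂ)).symm u‖ ^ 2 : ℝ) : ℂ) := by
  change star u ⬝ᵥ u = ((‖WithLp.toLp 2 u‖ ^ 2 : ℝ) : ℂ)
  rw [dotProduct_comm, ← EuclideanSpace.inner_toLp_toLp, inner_self_eq_norm_sq_to_K]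
  push_cast
  rfl

lemma norm_mulVec_le {b : Type*} [Fintype b] [DecidableEq b] (Δ : Matrix b b ℂ) (v : b → ℂ) :
    ‖(WithLp.equiv 2 (b → ℂ)).symm (Δ *ᵥ v)‖
      ≤ spNorm Δ * ‖(WithLp.equiv 2 (b → ℂ)).symm v‖ := by
  have h := (Matrix.toEuclideanLin Δ).toContinuousLinearMap.le_opNorm
    ((WithLp.equiv 2 (b → ℂ)).symm v)
  have key : (Matrix.toEuclideanLin Δ).toContinuousLinearMap ((WithLp.equiv 2 (b → ℂ)).symm v)
      = (WithLp.equiv 2 (b → ℂ)).symm (Δ *ᵥ v) := by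
    rw [LinearMap.coe_toContinuousLinearMap']
    exact Matrix.toEuclideanLin_apply_piLp_toLp Δ v
  rw [key] at h
  exact h

lemma quad_pos {b : Type*} [Fintype b] [DecidableEq b]
    (Δ : Matrix b b ℂ) (ξ : ℝ) (hΔ : spNorm Δ < ξ) (u v : b → ℂ) (huv : u ≠ 0 ∨ v ≠ 0) :
    0 < (ξ : ℂ) * (star u ⬝ᵥ u + star v ⬝ᵥ v)
        + (star u ⬝ᵥ (Δ *ᵥ v) + star (star u ⬝ᵥ (Δ *ᵥ v))) := by
  obtain ⟨a, ha⟩ : ∃ a : ℝ, ‖(WithLp.equiv 2 (b → ℂ)).symm u‖ = a := ⟨_, rfl⟩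
  obtain ⟨p, hp⟩ : ∃ p : ℝ, ‖(WithLp.equiv 2 (b → ℂ)).symm v‖ = p := ⟨_, rfl⟩
  have hN0 : (0 : ℝ) ≤ spNorm Δ := norm_nonneg _
  have ha0 : 0 ≤ a := ha ▸ norm_nonneg _
  have hp0 : 0 ≤ p := hp ▸ norm_nonneg _
  have hu2 : star u ⬝ᵥ u = ((a ^ 2 : ℝ) : ℂ) := by rw [dot_self_eq_norm_sq, ha]
  have hv2 : star v ⬝ᵥ v = ((p ^ 2 : ℝ) : ℂ) := by rw [dot_self_eq_norm_sq, hp]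
  have hcle : ‖star u ⬝ᵥ (Δ *ᵥ v)‖ ≤ spNorm Δ * a * p := by
    have h0 : (inner ℂ ((WithLp.equiv 2 (b → ℂ)).symm u)
          ((WithLp.equiv 2 (b → ℂ)).symm (Δ *ᵥ v)) : ℂ)
        = star u ⬝ᵥ (Δ *ᵥ v) :=
        (EuclideanSpace.inner_toLp_toLp u (Δ *ᵥ v)).trans (dotProduct_comm _ _)
    have h1 := norm_inner_le_norm (𝕜 := ℂ) ((WithLp.equiv 2 (b → ℂ)).symm u)
      ((WithLp.equiv 2 (b → ℂ)).symm (Δ *ᵥ v))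
    rw [h0, ha] at h1
    have h2 := norm_mulVec_le Δ v
    rw [hp] at h2
    nlinarith [norm_nonneg ((WithLp.equiv 2 (b → ℂ)).symm (Δ *ᵥ v))]
  have hre : -(spNorm Δ * a * p) ≤ (star u ⬝ᵥ (Δ *ᵥ v)).re := by
    have h3 : |(star u ⬝ᵥ (Δ *ᵥ v)).re| ≤ ‖star u ⬝ᵥ (Δ *ᵥ v)‖ := by
      exact Complex.abs_re_le_norm _
    have h4 := abs_le.mp (le_trans h3 hcle)
    linarith [h4.1]
  have happ : 0 < a ^ 2 + p ^ 2 := by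
    rcases huv with h | h
    · have h5 : star u ⬝ᵥ u ≠ 0 := fun hz => h (dotProduct_star_self_eq_zero.mp hz)
      have h6 : a ≠ 0 := by
        intro h0
        apply h5
        rw [hu2, h0]
        norm_num
      positivity
    · have h5 : star v ⬝ᵥ v ≠ 0 := fun hz => h (dotProduct_star_self_eq_zero.mp hz)
      have h6 : p ≠ 0 := by
        intro h0
        apply h5
        rw [hv2, h0]
        norm_num
      positivity
  have key : 0 < ξ * (a ^ 2 + p ^ 2) + 2 * (star u ⬝ᵥ (Δ *ᵥ v)).re := by
    nlinarith [mul_pos (sub_pos.2 hΔ) happ, mul_nonneg hN0 (sq_nonneg (a - p))]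
  have hcast : (ξ : ℂ) * (star u ⬝ᵥ u + star v ⬝ᵥ v)
      + (star u ⬝ᵥ (Δ *ᵥ v) + star (star u ⬝ᵥ (Δ *ᵥ v)))
      = ((ξ * (a ^ 2 + p ^ 2) + 2 * (star u ⬝ᵥ (Δ *ᵥ v)).re : ℝ) : ℂ) := by
    rw [hu2, hv2,
      show (star (star u ⬝ᵥ (Δ *ᵥ v)) : ℂ) = (starRingEnd ℂ) (star u ⬝ᵥ (Δ *ᵥ v)) from rfl,
      Complex.add_conj]
    push_cast
    ring
  rw [hcast, Complex.zero_lt_real]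
  exact key

/-- positivity of `ξ·diag(I,I,2I) + E₁ΔE₂ᴴ + E₂ΔᴴE₁ᴴ` when `‖Δ‖₂ < ξ`. -/
lemma G_posDef (Δ : Matrix (Fin n ⊕ Fin m) (Fin n ⊕ Fin m) ℂ) (ξ : ℝ)
    (hΔ : spNorm Δ < ξ) :
    (ξ • diagXX2 m (1 : Matrix (Fin n) (Fin n) ℂ)
      + (Emat1 n m * Δ * (Emat2 n m)ᴴ + Emat2 n m * Δᴴ * (Emat1 n m)ᴴ)).PosDef := by
  refine Matrix.PosDef.of_dotProduct_mulVec_pos ?_ ?_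
  · -- Hermitian
    unfold Matrix.IsHermitian
    rw [D0_eq]
    simp [conjTranspose_add, conjTranspose_smul, conjTranspose_mul,
      conjTranspose_conjTranspose, Matrix.mul_assoc]
    abel
  · intro x hx
    have hq : star x ⬝ᵥ ((ξ • diagXX2 m (1 : Matrix (Fin n) (Fin n) ℂ)
        + (Emat1 n m * Δ * (Emat2 n m)ᴴ + Emat2 n m * Δᴴ * (Emat1 n m)ᴴ)) *ᵥ x)
        = (ξ : ℂ) * (star ((Emat1 n m)ᴴ *ᵥ x) ⬝ᵥ ((Emat1 n m)ᴴ *ᵥ x)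
              + star ((Emat2 n m)ᴴ *ᵥ x) ⬝ᵥ ((Emat2 n m)ᴴ *ᵥ x))
          + (star ((Emat1 n m)ᴴ *ᵥ x) ⬝ᵥ (Δ *ᵥ ((Emat2 n m)ᴴ *ᵥ x))
              + star (star ((Emat1 n m)ᴴ *ᵥ x) ⬝ᵥ (Δ *ᵥ ((Emat2 n m)ᴴ *ᵥ x)))) := by
      rw [add_mulVec, add_mulVec, dotProduct_add, dotProduct_add,
        sandwich (Emat1 n m) (Emat2 n m) Δ x, sandwich (Emat2 n m) (Emat1 n m) Δᴴ x,
        conj_pair Δ ((Emat1 n m)ᴴ *ᵥ x) ((Emat2 n m)ᴴ *ᵥ x)]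
      rw [smul_mulVec, dotProduct_smul, D0_eq, add_mulVec, dotProduct_add,
        sandwich' (Emat1 n m) (Emat1 n m) x, sandwich' (Emat2 n m) (Emat2 n m) x]
      rw [Complex.real_smul]
    rw [hq]
    apply quad_pos Δ ξ hΔ
    by_contra h
    push_neg at h
    apply hx
    funext z
    have h1 := congrFun (E1_mulVec x ▸ h.1)
    have h2 := congrFun (E2_mulVec x ▸ h.2)
    simp only [Pi.zero_apply] at h1 h2
    match z with
    | Sum.inl i => exact h1 (Sum.inl i)
    | Sum.inr (Sum.inl i) => exact h2 (Sum.inl i)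
    | Sum.inr (Sum.inr k) => exact h1 (Sum.inr k)

end Aux

theorem stmt15 {n m : ℕ} (A : Matrix (Fin n) (Fin n) ℂ) (B : Matrix (Fin n) (Fin m) ℂ)
    (C : Matrix (Fin m) (Fin n) ℂ) (D : Matrix (Fin m) (Fin m) ℂ)
    (T : Matrix (Fin n) (Fin n) ℂ) (hT : IsUnit T)
    (X : Matrix (Fin n) (Fin n) ℂ) (hX : X = Tᴴ * T)
    (ξ : ℝ) (hξ0 : 0 ≤ ξ) (hξ1 : ξ < 1)
    (hLMI : (Wtil X A B C D - ξ • diagXX2 m X).PosSemidef) :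
    ∀ Δ : Matrix (Fin n ⊕ Fin m) (Fin n ⊕ Fin m) ℂ,
      (Wtil 1 (T * A * T⁻¹) (T * B) (C * T⁻¹) D
        + Emat1 n m * Δ * (Emat2 n m)ᴴ + Emat2 n m * Δᴴ * (Emat1 n m)ᴴ).det = 0 →
      ξ ≤ spNorm Δ := by
  intro Δ hdet
  by_contra hlt
  push_neg at hlt
  subst hX
  have hPSD : (Wtil 1 (T * A * T⁻¹) (T * B) (C * T⁻¹) D - ξ • diagXX2 m 1).PosSemidef := by
    have h := hLMI.conjTranspose_mul_mul_same (Smat m T)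
    have heq : (Smat m T)ᴴ * (Wtil (Tᴴ * T) A B C D - ξ • diagXX2 m (Tᴴ * T)) * Smat m T
        = Wtil 1 (T * A * T⁻¹) (T * B) (C * T⁻¹) D - ξ • diagXX2 m 1 := by
      rw [Matrix.mul_sub, Matrix.sub_mul, conj_Wtil T A B C D hT]
      congr 1
      rw [← conj_diag (m := m) T hT]
      rw [Matrix.mul_smul, Matrix.smul_mul]
    rwa [heq] at h
  have hPD := G_posDef Δ ξ hlt
  have hK : (Wtil 1 (T * A * T⁻¹) (T * B) (C * T⁻¹) D
      + Emat1 n m * Δ * (Emat2 n m)ᴴ + Emat2 n m * Δᴴ * (Emat1 n m)ᴴ).PosDef := by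
    have h := Matrix.PosDef.posSemidef_add hPSD hPD
    have : Wtil 1 (T * A * T⁻¹) (T * B) (C * T⁻¹) D - ξ • diagXX2 m 1
        + (ξ • diagXX2 m 1 + (Emat1 n m * Δ * (Emat2 n m)ᴴ + Emat2 n m * Δᴴ * (Emat1 n m)ᴴ))
        = Wtil 1 (T * A * T⁻¹) (T * B) (C * T⁻¹) D
          + Emat1 n m * Δ * (Emat2 n m)ᴴ + Emat2 n m * Δᴴ * (Emat1 n m)ᴴ := by
      abel
    rwa [this] at h
  exact hK.det_pos.ne' hdet
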